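/- arXiv:1901.06807 — 2 statements merged into one kernel-verified Lean document; each statement's English description precedes it below -/
import Mathlib

section
/- Let X and Y be positive definite n×n complex matrices and let 0 < s < 1 be real. Then Tr(X^s) ≤ s·Tr(XY) + (1-s)·Tr(Y^{-s/(1-s)}). -/
open Matrix ComplexOrder

variable {n : ℕ}

/-- Apply a real function to a matrix via the spectral decomposition (functional calculus).
Returns `0` if the matrix is not Hermitian. -/
noncomputable def matFun (f : ℝ → ℝ) (A : Matrix (Fin n) (Fin n) ℂ) :
    Matrix (Fin n) (Fin n) ℂ :=
  if hA : A.IsHermitian then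
    (hA.eigenvectorUnitary : Matrix (Fin n) (Fin n) ℂ) *
      Matrix.diagonal (fun i => (f (hA.eigenvalues i) : ℂ)) *
      (star hA.eigenvectorUnitary : Matrix (Fin n) (Fin n) ℂ)
  else 0

/-- Matrix power `A^r` by functional calculus. -/
noncomputable def mpow (A : Matrix (Fin n) (Fin n) ℂ) (r : ℝ) : Matrix (Fin n) (Fin n) ℂ :=
  matFun (fun t => t ^ r) A

/-- Deformed matrix logarithm `log_q`. -/
noncomputable def mlogq (q : ℝ) (A : Matrix (Fin n) (Fin n) ℂ) : Matrix (Fin n) (Fin n) ℂ :=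
  matFun (fun t => if q = 1 then Real.log t else (t ^ (q - 1) - 1) / (q - 1)) A

/-- Deformed matrix exponential `exp_q`. -/
noncomputable def mexpq (q : ℝ) (M : Matrix (Fin n) (Fin n) ℂ) : Matrix (Fin n) (Fin n) ℂ :=
  matFun (fun s => if q = 1 then Real.exp s else ((q - 1) * s + 1) ^ (1 / (q - 1))) M

/-- Real part of the trace. -/
noncomputable def rtr (A : Matrix (Fin n) (Fin n) ℂ) : ℝ := (Matrix.trace A).re

/-- Scalar deformed logarithm. -/
noncomputable def dlog (q t : ℝ) : ℝ := if q = 1 then Real.log t else (t ^ (q - 1) - 1) / (q - 1)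

lemma scalar_young {a b s : ℝ} (ha : 0 < a) (hb : 0 < b) (hs0 : 0 < s) (hs1 : s < 1) :
    a ^ s ≤ s * (a * b) + (1 - s) * b ^ (-s / (1 - s)) := by
  have h1s : (0:ℝ) < 1 - s := by linarith
  have key := Real.geom_mean_le_arith_mean2_weighted hs0.le h1s.le
    (mul_nonneg ha.le hb.le) (Real.rpow_nonneg hb.le (-s/(1-s))) (by ring)
  have e1 : (a*b) ^ s * (b ^ (-s/(1-s))) ^ (1-s) = a ^ s := by
    rw [Real.mul_rpow ha.le hb.le, ← Real.rpow_mul hb.le,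
      div_mul_cancel₀ _ h1s.ne', mul_assoc, ← Real.rpow_add hb, add_neg_cancel,
      Real.rpow_zero, mul_one]
  rw [e1] at key
  exact key

lemma rtr_matFun {n : ℕ} (f : ℝ → ℝ) (A : Matrix (Fin n) (Fin n) ℂ) (hA : A.IsHermitian) :
    rtr (matFun f A) = ∑ i, f (hA.eigenvalues i) := by
  rw [rtr, matFun, dif_pos hA, Matrix.trace_mul_cycle,
    show star (hA.eigenvectorUnitary : Matrix (Fin n) (Fin n) ℂ) *
      (hA.eigenvectorUnitary : Matrix (Fin n) (Fin n) ℂ) = 1 from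
      Matrix.mem_unitaryGroup_iff'.mp hA.eigenvectorUnitary.2,
    Matrix.one_mul, Matrix.trace_diagonal]
  simp

lemma rtr_mul_spec {n : ℕ} (X Y : Matrix (Fin n) (Fin n) ℂ) (hX : X.IsHermitian)
    (hY : Y.IsHermitian) :
    rtr (X * Y) = ∑ i, ∑ j, hX.eigenvalues i * hY.eigenvalues j *
      Complex.normSq ((star (hX.eigenvectorUnitary : Matrix (Fin n) (Fin n) ℂ) *
        (hY.eigenvectorUnitary : Matrix (Fin n) (Fin n) ℂ)) i j) := by
  set U : Matrix (Fin n) (Fin n) ℂ := ↑hX.eigenvectorUnitary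
  set V : Matrix (Fin n) (Fin n) ℂ := ↑hY.eigenvectorUnitary
  set W : Matrix (Fin n) (Fin n) ℂ := star U * V with hW
  set Dl : Matrix (Fin n) (Fin n) ℂ := Matrix.diagonal (fun i => (hX.eigenvalues i : ℂ))
  set Dm : Matrix (Fin n) (Fin n) ℂ := Matrix.diagonal (fun i => (hY.eigenvalues i : ℂ))
  have hUU : star U * U = 1 := Matrix.mem_unitaryGroup_iff'.mp hX.eigenvectorUnitary.2
  have hVV : V * star V = 1 := Matrix.mem_unitaryGroup_iff.mp hY.eigenvectorUnitary.2
  have hUU2 : U * star U = 1 := Matrix.mem_unitaryGroup_iff.mp hX.eigenvectorUnitary.2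
  have key : Matrix.trace (X * Y) = Matrix.trace (Dl * W * Dm * star W) := by
    have hXe : X = U * Dl * star U := by
      exact hX.spectral_theorem
    have hYe : Y = V * Dm * star V := by
      exact hY.spectral_theorem
    rw [hXe, hYe]
    have : U * Dl * star U * (V * Dm * star V) = U * (Dl * W * Dm * star W * star U) := by
      simp only [hW, Matrix.star_mul, star_star, Matrix.mul_assoc]
      rw [hUU2, Matrix.mul_one]
    rw [this, Matrix.trace_mul_comm, Matrix.mul_assoc, hUU, Matrix.mul_one]
  rw [rtr, key]
  have expand : Matrix.trace (Dl * W * Dm * star W) =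
      ∑ i, ∑ j, ((hX.eigenvalues i : ℂ) * (hY.eigenvalues j : ℂ) *
        (Complex.normSq (W i j) : ℂ)) := by
    simp only [Matrix.trace, Matrix.diag_apply, Matrix.mul_apply, Dl, Dm,
      Matrix.diagonal_apply, Matrix.star_apply, ite_mul, zero_mul, mul_ite, mul_zero,
      Finset.sum_ite_eq, Finset.sum_ite_eq', Finset.mem_univ, if_true]
    refine Finset.sum_congr rfl fun i _ => Finset.sum_congr rfl fun j _ => ?_
    have h : W i j * star (W i j) = (Complex.normSq (W i j) : ℂ) := by
      rw [Complex.star_def, Complex.mul_conj]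
    calc (hX.eigenvalues i : ℂ) * W i j * (hY.eigenvalues j : ℂ) * star (W i j)
        = (hX.eigenvalues i : ℂ) * (hY.eigenvalues j : ℂ) * (W i j * star (W i j)) := by ring
      _ = _ := by rw [h]
  rw [expand]
  simp [Complex.re_sum]

lemma row_sum {n : ℕ} (W : Matrix (Fin n) (Fin n) ℂ) (h : W * star W = 1) (i : Fin n) :
    ∑ j, Complex.normSq (W i j) = 1 := by
  have h1 := congrFun (congrFun h i) i
  simp only [Matrix.mul_apply, Matrix.star_apply, Matrix.one_apply_eq] at h1
  have h2 := congrArg Complex.re h1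
  simpa [Complex.star_def, Complex.mul_conj, Complex.re_sum] using h2

lemma col_sum {n : ℕ} (W : Matrix (Fin n) (Fin n) ℂ) (h : star W * W = 1) (j : Fin n) :
    ∑ i, Complex.normSq (W i j) = 1 := by
  have h1 := congrFun (congrFun h j) j
  simp only [Matrix.mul_apply, Matrix.star_apply, Matrix.one_apply_eq] at h1
  have h2 := congrArg Complex.re h1
  simp only [Complex.re_sum, Complex.one_re] at h2
  rw [← h2]
  refine Finset.sum_congr rfl fun i _ => ?_
  rw [Complex.star_def, mul_comm, Complex.mul_conj]
  simp

theorem tracial_young_aux {n : ℕ} (X Y : Matrix (Fin n) (Fin n) ℂ)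
    (hX : X.PosDef) (hY : Y.PosDef) (s : ℝ) (hs0 : 0 < s) (hs1 : s < 1) :
    rtr (mpow X s) ≤ s * rtr (X * Y) + (1 - s) * rtr (mpow Y (-s / (1 - s))) := by
  have hl : ∀ i, 0 < hX.1.eigenvalues i := hX.eigenvalues_pos
  have hm : ∀ j, 0 < hY.1.eigenvalues j := hY.eigenvalues_pos
  set U : Matrix (Fin n) (Fin n) ℂ := ↑hX.1.eigenvectorUnitary with hUdef
  set V : Matrix (Fin n) (Fin n) ℂ := ↑hY.1.eigenvectorUnitary with hVdef
  set W : Matrix (Fin n) (Fin n) ℂ := star U * V with hWdef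
  have hUU : star U * U = 1 := Matrix.mem_unitaryGroup_iff'.mp hX.1.eigenvectorUnitary.2
  have hVV : V * star V = 1 := Matrix.mem_unitaryGroup_iff.mp hY.1.eigenvectorUnitary.2
  have hVV' : star V * V = 1 := Matrix.mem_unitaryGroup_iff'.mp hY.1.eigenvectorUnitary.2
  have hUU2 : U * star U = 1 := Matrix.mem_unitaryGroup_iff.mp hX.1.eigenvectorUnitary.2
  have hWW : W * star W = 1 := by
    rw [hWdef, Matrix.star_mul, star_star]
    calc star U * V * (star V * U) = star U * (V * star V) * U := by
          simp only [Matrix.mul_assoc]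
      _ = 1 := by rw [hVV, Matrix.mul_one, hUU]
  have hWW' : star W * W = 1 := by
    rw [hWdef, Matrix.star_mul, star_star]
    calc star V * U * (star U * V) = star V * (U * star U) * V := by
          simp only [Matrix.mul_assoc]
      _ = 1 := by rw [hUU2, Matrix.mul_one, hVV']
  have hrow := row_sum W hWW
  have hcol := col_sum W hWW'
  have hXY := rtr_mul_spec X Y hX.1 hY.1
  rw [show rtr (mpow X s) = ∑ i, (hX.1.eigenvalues i) ^ s from rtr_matFun _ X hX.1,
    show rtr (mpow Y (-s/(1-s))) = ∑ j, (hY.1.eigenvalues j) ^ (-s/(1-s)) from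
      rtr_matFun _ Y hY.1, hXY]
  calc ∑ i, (hX.1.eigenvalues i) ^ s
      = ∑ i, ∑ j, Complex.normSq (W i j) * (hX.1.eigenvalues i) ^ s := by
        refine Finset.sum_congr rfl fun i _ => ?_
        rw [← Finset.sum_mul, hrow i, one_mul]
    _ ≤ ∑ i, ∑ j, Complex.normSq (W i j) *
        (s * (hX.1.eigenvalues i * hY.1.eigenvalues j) +
          (1 - s) * (hY.1.eigenvalues j) ^ (-s / (1 - s))) := by
        refine Finset.sum_le_sum fun i _ => Finset.sum_le_sum fun j _ => ?_
        exact mul_le_mul_of_nonneg_left (scalar_young (hl i) (hm j) hs0 hs1)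
          (Complex.normSq_nonneg _)
    _ = s * (∑ i, ∑ j, hX.1.eigenvalues i * hY.1.eigenvalues j * Complex.normSq (W i j))
        + (1 - s) * ∑ j, (hY.1.eigenvalues j) ^ (-s / (1 - s)) := by
        simp only [mul_add, Finset.sum_add_distrib]
        congr 1
        · rw [Finset.mul_sum]
          refine Finset.sum_congr rfl fun i _ => ?_
          rw [Finset.mul_sum]
          exact Finset.sum_congr rfl fun j _ => by ring
        · rw [Finset.sum_comm, Finset.mul_sum]
          refine Finset.sum_congr rfl fun j _ => ?_
          rw [show ∀ p : Fin n → ℝ, (∑ i, p i * ((1 - s) * (hY.1.eigenvalues j) ^ (-s / (1 - s))))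
            = (∑ i, p i) * ((1 - s) * (hY.1.eigenvalues j) ^ (-s / (1 - s))) from
            fun p => (Finset.sum_mul _ _ _).symm]
          rw [hcol j, one_mul]
end

section
/- Let 1 < q ≤ 2, and let X be a positive definite n×n matrix with Tr(X) = 1. Then Tr(X^{2-q} log_q X) equals the supremum over self-adjoint matrices L with L > -1/(q-1)·I of Tr(X^{2-q} L) - log_q(Tr exp_q L), and the supremum is attained at L = log_q X. -/
open Matrix ComplexOrder

variable {n : ℕ}

section helpers
open Polynomial

noncomputable def conjAH (V : Matrix (Fin n) (Fin n) ℂ) (h1 : star V * V = 1)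
    (h2 : V * star V = 1) : Matrix (Fin n) (Fin n) ℂ →ₐ[ℂ] Matrix (Fin n) (Fin n) ℂ where
  toFun M := V * M * star V
  map_one' := by show V * 1 * star V = 1; rw [mul_one, h2]
  map_mul' M N := by
    show V * (M * N) * star V = (V * M * star V) * (V * N * star V)
    simp only [mul_assoc]
    rw [← mul_assoc (star V) V, h1, one_mul]
  map_zero' := by show V * 0 * star V = 0; simp
  map_add' M N := by
    show V * (M + N) * star V = V * M * star V + V * N * star V
    rw [mul_add, add_mul]
  commutes' r := by
    show V * (algebraMap ℂ _ r) * star V = algebraMap ℂ _ r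
    simp only [Algebra.algebraMap_eq_smul_one, mul_smul_comm, smul_mul_assoc, mul_one, h2]

lemma aeval_conj (V : Matrix (Fin n) (Fin n) ℂ) (h1 : star V * V = 1)
    (h2 : V * star V = 1) (M : Matrix (Fin n) (Fin n) ℂ) (p : ℂ[X]) :
    aeval (V * M * star V) p = V * aeval M p * star V :=
  aeval_algHom_apply (conjAH V h1 h2) M p

lemma aeval_diag (d : Fin n → ℂ) (p : ℂ[X]) :
    aeval (Matrix.diagonal d) p = Matrix.diagonal (fun i => p.eval (d i)) := by
  have h := aeval_algHom_apply (Matrix.diagonalAlgHom (α := ℂ) (n := Fin n) ℂ) d p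
  have h3 : (aeval d) p = fun i => p.eval (d i) := by
    funext i
    have h2 := aeval_algHom_apply (Pi.evalAlgHom ℂ (fun _ : Fin n => ℂ) i) d p
    simpa [coe_aeval_eq_eval] using h2.symm
  rw [show (Matrix.diagonalAlgHom (α := ℂ) (n := Fin n) ℂ) d = Matrix.diagonal d from rfl,
    h3] at h
  exact h

lemma herm_conj_diag {B V : Matrix (Fin n) (Fin n) ℂ} (d : Fin n → ℝ)
    (hBd : B = V * Matrix.diagonal (fun i => (d i : ℂ)) * star V) : B.IsHermitian := by
  rw [hBd]
  have hD : (Matrix.diagonal (fun i => (d i : ℂ)))ᴴ = Matrix.diagonal (fun i => (d i : ℂ)) := by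
    ext i j
    simp only [conjTranspose_apply]
    by_cases h : i = j
    · subst h; simp [Matrix.diagonal_apply_eq, RCLike.star_def, Complex.conj_ofReal]
    · rw [Matrix.diagonal_apply_ne _ (Ne.symm h), Matrix.diagonal_apply_ne _ h, star_zero]
  show (V * Matrix.diagonal (fun i => (d i : ℂ)) * star V)ᴴ = _
  rw [conjTranspose_mul, conjTranspose_mul, hD]
  simp [star_eq_conjTranspose, mul_assoc]

lemma matFun_conj_diag (g : ℝ → ℝ) {B V : Matrix (Fin n) (Fin n) ℂ}
    (h1 : star V * V = 1) (h2 : V * star V = 1) (d : Fin n → ℝ)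
    (hBd : B = V * Matrix.diagonal (fun i => (d i : ℂ)) * star V) :
    matFun g B = V * Matrix.diagonal (fun i => (g (d i) : ℂ)) * star V := by
  have hB : B.IsHermitian := herm_conj_diag d hBd
  set U : Matrix (Fin n) (Fin n) ℂ := (hB.eigenvectorUnitary : Matrix (Fin n) (Fin n) ℂ) with hU
  have hU1 : star U * U = 1 := mem_unitaryGroup_iff'.mp hB.eigenvectorUnitary.2
  have hU2 : U * star U = 1 := mem_unitaryGroup_iff.mp hB.eigenvectorUnitary.2
  set s : Finset ℂ := (Finset.univ.image fun i => (d i : ℂ)) ∪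
    (Finset.univ.image fun i => (hB.eigenvalues i : ℂ)) with hs
  set p : ℂ[X] := Lagrange.interpolate s id (fun z => (g z.re : ℂ)) with hp
  have hinj : Set.InjOn id (s : Set ℂ) := fun a _ b _ h => h
  have hnode : ∀ z ∈ s, p.eval z = (g z.re : ℂ) := fun z hz => by
    have := Lagrange.eval_interpolate_at_node (fun z : ℂ => (g z.re : ℂ)) hinj hz
    exact this
  have key1 : aeval B p = V * Matrix.diagonal (fun i => (g (d i) : ℂ)) * star V := by
    rw [hBd, aeval_conj V h1 h2, aeval_diag]
    have he : (fun i => p.eval ((d i : ℂ))) = fun i => (g (d i) : ℂ) := by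
      funext i
      rw [hnode _ (Finset.mem_union_left _ (Finset.mem_image_of_mem _ (Finset.mem_univ i)))]
      simp
    rw [he]
  have key2 : aeval B p = matFun g B := by
    conv_lhs => rw [hB.spectral_theorem, Unitary.conjStarAlgAut_apply]
    rw [aeval_conj U hU1 hU2, aeval_diag, matFun, dif_pos hB]
    have he : (fun i => p.eval ((RCLike.ofReal ∘ hB.eigenvalues) i)) =
        fun i => (g (hB.eigenvalues i) : ℂ) := by
      funext i
      show p.eval ((hB.eigenvalues i : ℝ) : ℂ) = _
      rw [hnode _ (Finset.mem_union_right _ (Finset.mem_image_of_mem _ (Finset.mem_univ i)))]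
      simp
    rw [he]
  rw [← key2, key1]

lemma trace_unitary_conj {U : Matrix (Fin n) (Fin n) ℂ} (h1 : star U * U = 1)
    (M : Matrix (Fin n) (Fin n) ℂ) : (U * M * star U).trace = M.trace := by
  rw [Matrix.trace_mul_comm, ← mul_assoc, h1, one_mul]

lemma trace_conj_diag {V : Matrix (Fin n) (Fin n) ℂ} (h1 : star V * V = 1) (c : Fin n → ℂ) :
    (V * Matrix.diagonal c * star V).trace = ∑ i, c i := by
  rw [trace_unitary_conj h1, trace_diagonal]

lemma posdef_conj {V M : Matrix (Fin n) (Fin n) ℂ} (h1 : star V * V = 1)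
    (hM : M.PosDef) : (V * M * star V).PosDef := by
  have h2 : V * star V = 1 := mul_eq_one_comm.mp h1
  refine Matrix.posDef_iff_dotProduct_mulVec.mpr ⟨?_, ?_⟩
  · show (V * M * star V)ᴴ = _
    simp [star_eq_conjTranspose, conjTranspose_mul, conjTranspose_conjTranspose,
      hM.1.eq, mul_assoc]
  · intro x hx
    set y := star V *ᵥ x with hy
    have hyne : y ≠ 0 := by
      intro h0
      apply hx
      have : V *ᵥ y = x := by
        rw [hy, Matrix.mulVec_mulVec, h2, Matrix.one_mulVec]
      rw [h0, Matrix.mulVec_zero] at this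
      exact this.symm
    have hdot : star x ⬝ᵥ ((V * M * star V) *ᵥ x) = star y ⬝ᵥ (M *ᵥ y) := by
      have hsy : star y = star x ᵥ* V := by
        rw [hy, Matrix.star_mulVec, star_eq_conjTranspose, conjTranspose_conjTranspose]
      rw [← Matrix.mulVec_mulVec, ← Matrix.mulVec_mulVec, Matrix.dotProduct_mulVec, ← hsy]
    rw [hdot]
    exact hM.dotProduct_mulVec_pos hyne

lemma trace_prod_conj_diag {U V : Matrix (Fin n) (Fin n) ℂ}
    (hU1 : star U * U = 1) (hU2 : U * star U = 1)
    (c e : Fin n → ℂ) :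
    ((U * Matrix.diagonal c * star U) * (V * Matrix.diagonal e * star V)).trace
      = ∑ i, ∑ j, c i * e j * ((star U * V) i j * star ((star U * V) i j)) := by
  set W := star U * V with hW
  have hsW : star W = star V * U := by rw [hW, StarMul.star_mul, star_star]
  have hrw : (U * Matrix.diagonal c * star U) * (V * Matrix.diagonal e * star V)
      = U * (Matrix.diagonal c * W * Matrix.diagonal e * star W) * star U := by
    rw [hsW, hW]
    simp only [mul_assoc]
    rw [hU2, mul_one]
  rw [hrw, trace_unitary_conj hU1,
    show Matrix.diagonal c * W * Matrix.diagonal e * star W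
      = Matrix.diagonal c * (W * Matrix.diagonal e * star W) by simp only [mul_assoc]]
  show ∑ i, (Matrix.diagonal c * (W * Matrix.diagonal e * star W)) i i = _
  refine Finset.sum_congr rfl fun i _ => ?_
  rw [Matrix.diagonal_mul, Matrix.mul_apply, Finset.mul_sum]
  refine Finset.sum_congr rfl fun j _ => ?_
  rw [Matrix.mul_diagonal, Matrix.star_apply]
  ring

lemma smul_conj_diag_add_one (r : ℝ) {V : Matrix (Fin n) (Fin n) ℂ} (h1 : star V * V = 1)
    (h2 : V * star V = 1) (c : Fin n → ℝ) :
    r • (V * Matrix.diagonal (fun i => (c i : ℂ)) * star V) + 1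
      = V * Matrix.diagonal (fun i => ((r * c i + 1 : ℝ) : ℂ)) * star V := by
  have hd : Matrix.diagonal (fun i => ((r * c i + 1 : ℝ) : ℂ))
      = r • Matrix.diagonal (fun i => (c i : ℂ)) + 1 := by
    ext i j
    by_cases h : i = j
    · subst h
      simp only [Matrix.add_apply, Matrix.smul_apply, Matrix.diagonal_apply_eq,
        Matrix.one_apply_eq, Complex.real_smul]
      push_cast
      ring
    · simp [Matrix.diagonal_apply_ne _ h, Matrix.one_apply_ne h]
  rw [hd, mul_add, add_mul, mul_one, h2, mul_smul_comm, smul_mul_assoc]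

end helpers
theorem gibbs_dual_variational {n : ℕ} (q : ℝ) (hq1 : 1 < q) (hq2 : q ≤ 2)
    (X : Matrix (Fin n) (Fin n) ℂ) (hX : X.PosDef) (hTr : X.trace = 1) :
    (∀ L : Matrix (Fin n) (Fin n) ℂ, L.IsHermitian → ((q - 1) • L + 1).PosDef →
      rtr (mpow X (2 - q) * L) - dlog q (rtr (mexpq q L)) ≤
        rtr (mpow X (2 - q) * mlogq q X)) ∧
    (mlogq q X).IsHermitian ∧ ((q - 1) • mlogq q X + 1).PosDef ∧
    rtr (mpow X (2 - q) * mlogq q X) - dlog q (rtr (mexpq q (mlogq q X))) =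
      rtr (mpow X (2 - q) * mlogq q X) := by
  have hq : q ≠ 1 := hq1.ne'
  have hq1' : 0 < q - 1 := sub_pos.mpr hq1
  have hs0 : 0 ≤ 2 - q := by linarith
  have hnon : Nonempty (Fin n) := by
    by_contra h
    rw [not_nonempty_iff] at h
    haveI := h
    rw [Matrix.trace, Finset.univ_eq_empty, Finset.sum_empty] at hTr
    exact one_ne_zero hTr.symm
  -- spectral data of X
  have hXh : X.IsHermitian := hX.1
  set U : Matrix (Fin n) (Fin n) ℂ := (hXh.eigenvectorUnitary : Matrix (Fin n) (Fin n) ℂ)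
    with hUdef
  have hU1 : star U * U = 1 := mem_unitaryGroup_iff'.mp hXh.eigenvectorUnitary.2
  have hU2 : U * star U = 1 := mem_unitaryGroup_iff.mp hXh.eigenvectorUnitary.2
  set x : Fin n → ℝ := hXh.eigenvalues with hxdef
  have hxpos : ∀ i, 0 < x i := fun i => hX.eigenvalues_pos i
  have hXd : X = U * Matrix.diagonal (fun i => (x i : ℂ)) * star U := hXh.spectral_theorem
  have hsum1 : ∑ i, x i = 1 := by
    have h := trace_conj_diag hU1 (fun i => (x i : ℂ))
    rw [← hXd, hTr] at h
    have h2 : ((∑ i, x i : ℝ) : ℂ) = 1 := by push_cast; exact h.symm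
    exact_mod_cast h2
  -- matrix identities for X
  have hpow : mpow X (2 - q)
      = U * Matrix.diagonal (fun i => ((x i ^ (2 - q) : ℝ) : ℂ)) * star U := by
    simp only [mpow]
    exact matFun_conj_diag _ hU1 hU2 x hXd
  have hlog : mlogq q X = U * Matrix.diagonal
      (fun i => (((x i ^ (q - 1) - 1) / (q - 1) : ℝ) : ℂ)) * star U := by
    simp only [mlogq]
    have h := matFun_conj_diag
      (fun t => if q = 1 then Real.log t else (t ^ (q - 1) - 1) / (q - 1)) hU1 hU2 x hXd
    simpa [hq] using h
  have hherm : (mlogq q X).IsHermitian := herm_conj_diag _ hlog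
  have hpd1 : ((q - 1) • mlogq q X + 1).PosDef := by
    rw [hlog, smul_conj_diag_add_one (q - 1) hU1 hU2]
    have he : (fun i => (((q - 1) * ((x i ^ (q - 1) - 1) / (q - 1)) + 1 : ℝ) : ℂ))
        = fun i => ((x i ^ (q - 1) : ℝ) : ℂ) := by
      funext i
      congr 1
      field_simp
      ring
    rw [he]
    refine posdef_conj hU1 (Matrix.posDef_diagonal_iff.mpr fun i => ?_)
    rw [Complex.zero_lt_real]
    exact Real.rpow_pos_of_pos (hxpos i) _
  -- exp_q (log_q X) = X
  have hexplog : mexpq q (mlogq q X) = X := by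
    simp only [mexpq]
    have h := matFun_conj_diag
      (fun s => if q = 1 then Real.exp s else ((q - 1) * s + 1) ^ (1 / (q - 1))) hU1 hU2
      (fun i => (x i ^ (q - 1) - 1) / (q - 1)) hlog
    have hfe : (fun i : Fin n =>
        (((fun s => if q = 1 then Real.exp s else ((q - 1) * s + 1) ^ (1 / (q - 1)))
          ((fun i => (x i ^ (q - 1) - 1) / (q - 1)) i) : ℝ) : ℂ))
        = fun i => ((x i : ℝ) : ℂ) := by
      funext i
      show ((if q = 1 then Real.exp ((x i ^ (q - 1) - 1) / (q - 1))
        else ((q - 1) * ((x i ^ (q - 1) - 1) / (q - 1)) + 1) ^ (1 / (q - 1)) : ℝ) : ℂ) = _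
      rw [if_neg hq]
      congr 1
      have h1 : (q - 1) * ((x i ^ (q - 1) - 1) / (q - 1)) + 1 = x i ^ (q - 1) := by field_simp; ring
      rw [h1, ← Real.rpow_mul (hxpos i).le, mul_one_div, div_self hq1'.ne', Real.rpow_one]
    rw [hfe] at h
    rw [h, ← hXd]
  -- the common RHS value
  have hprod2 : mpow X (2 - q) * mlogq q X = U * Matrix.diagonal
      (fun i => ((x i ^ (2 - q) * ((x i ^ (q - 1) - 1) / (q - 1)) : ℝ) : ℂ)) * star U := by
    rw [hpow, hlog]
    simp only [mul_assoc]
    rw [← mul_assoc (star U) U, hU1, one_mul, ← mul_assoc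
      (Matrix.diagonal fun i => ((x i ^ (2 - q) : ℝ) : ℂ)), Matrix.diagonal_mul_diagonal]
    congr 2
    funext i
    push_cast
    ring
  have hRHS : rtr (mpow X (2 - q) * mlogq q X)
      = ∑ i, x i ^ (2 - q) * ((x i ^ (q - 1) - 1) / (q - 1)) := by
    rw [hprod2, rtr, trace_conj_diag hU1, ← Complex.ofReal_sum, Complex.ofReal_re]
  have h4 : dlog q (rtr (mexpq q (mlogq q X))) = 0 := by
    rw [hexplog, rtr, hTr, Complex.one_re]
    simp [dlog, hq, Real.one_rpow]
  refine ⟨?_, hherm, hpd1, by rw [h4, sub_zero]⟩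
  -- main inequality
  intro L hL hLpd
  set V : Matrix (Fin n) (Fin n) ℂ := (hL.eigenvectorUnitary : Matrix (Fin n) (Fin n) ℂ)
    with hVdef
  have hV1 : star V * V = 1 := mem_unitaryGroup_iff'.mp hL.eigenvectorUnitary.2
  have hV2 : V * star V = 1 := mem_unitaryGroup_iff.mp hL.eigenvectorUnitary.2
  set μ : Fin n → ℝ := hL.eigenvalues with hmudef
  have hLd : L = V * Matrix.diagonal (fun j => (μ j : ℂ)) * star V := hL.spectral_theorem
  -- positivity of (q-1) μ + 1
  have hmu : ∀ j, 0 < (q - 1) * μ j + 1 := by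
    have h := hLpd
    rw [hLd, smul_conj_diag_add_one (q - 1) hV1 hV2] at h
    have h2 := posdef_conj (V := star V) (by rw [star_star]; exact hV2) h
    rw [star_star] at h2
    have h3 : star V * (V * Matrix.diagonal (fun j => (((q - 1) * μ j + 1 : ℝ) : ℂ)) * star V) * V
        = Matrix.diagonal (fun j => (((q - 1) * μ j + 1 : ℝ) : ℂ)) := by
      simp only [mul_assoc]
      rw [hV1, mul_one, ← mul_assoc, hV1, one_mul]
    rw [h3] at h2
    intro j
    have h4 := (Matrix.posDef_diagonal_iff.mp h2) j
    rw [Complex.zero_lt_real] at h4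
    exact h4
  set a : Fin n → ℝ := fun j => ((q - 1) * μ j + 1) ^ (1 / (q - 1)) with hadef
  have ha : ∀ j, 0 < a j := fun j => Real.rpow_pos_of_pos (hmu j) _
  have haq : ∀ j, a j ^ (q - 1) = (q - 1) * μ j + 1 := by
    intro j
    rw [hadef]
    rw [← Real.rpow_mul (hmu j).le, one_div, inv_mul_cancel₀ hq1'.ne', Real.rpow_one]
  set T : ℝ := ∑ j, a j with hTdef
  have hT : 0 < T := Finset.sum_pos (fun j _ => ha j) Finset.univ_nonempty
  have hexpL : mexpq q L = V * Matrix.diagonal (fun j => ((a j : ℝ) : ℂ)) * star V := by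
    simp only [mexpq]
    have h := matFun_conj_diag
      (fun s => if q = 1 then Real.exp s else ((q - 1) * s + 1) ^ (1 / (q - 1))) hV1 hV2 μ hLd
    simpa [hq, hadef] using h
  have hTtr : rtr (mexpq q L) = T := by
    rw [hexpL, rtr, trace_conj_diag hV1, ← Complex.ofReal_sum, Complex.ofReal_re]
  -- overlap matrix
  set W : Matrix (Fin n) (Fin n) ℂ := star U * V with hWdef
  set p : Fin n → Fin n → ℝ := fun i j => Complex.normSq (W i j) with hpdef
  have hp : ∀ i j, 0 ≤ p i j := fun i j => Complex.normSq_nonneg _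
  have hWW : W * star W = 1 := by
    rw [hWdef, StarMul.star_mul, star_star, mul_assoc, ← mul_assoc V, hV2, one_mul, hU1]
  have hW'W : star W * W = 1 := by
    rw [hWdef, StarMul.star_mul, star_star, mul_assoc, ← mul_assoc U, hU2, one_mul, hV1]
  have hrow : ∀ i, ∑ j, p i j = 1 := by
    intro i
    have h : (W * star W) i i = (1 : Matrix (Fin n) (Fin n) ℂ) i i := by rw [hWW]
    rw [Matrix.mul_apply, Matrix.one_apply_eq] at h
    have h2 : ∀ j, W i j * (star W) j i = ((p i j : ℝ) : ℂ) := by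
      intro j
      rw [Matrix.star_apply, show star (W i j) = (starRingEnd ℂ) (W i j) from rfl,
        Complex.mul_conj]
    simp_rw [h2, ← Complex.ofReal_sum] at h
    exact_mod_cast h
  have hcol : ∀ j, ∑ i, p i j = 1 := by
    intro j
    have h : (star W * W) j j = (1 : Matrix (Fin n) (Fin n) ℂ) j j := by rw [hW'W]
    rw [Matrix.mul_apply, Matrix.one_apply_eq] at h
    have h2 : ∀ i, (star W) j i * W i j = ((p i j : ℝ) : ℂ) := by
      intro i
      rw [Matrix.star_apply, show star (W i j) = (starRingEnd ℂ) (W i j) from rfl,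
        mul_comm, Complex.mul_conj]
    simp_rw [h2, ← Complex.ofReal_sum] at h
    exact_mod_cast h
  have hLtr : rtr (mpow X (2 - q) * L) = ∑ i, ∑ j, x i ^ (2 - q) * μ j * p i j := by
    rw [hpow, hLd, rtr, trace_prod_conj_diag hU1 hU2]
    have h2 : ∀ i j, ((x i ^ (2 - q) : ℝ) : ℂ) * ((μ j : ℝ) : ℂ)
        * ((star U * V) i j * star ((star U * V) i j))
        = ((x i ^ (2 - q) * μ j * p i j : ℝ) : ℂ) := by
      intro i j
      rw [show star ((star U * V) i j) = (starRingEnd ℂ) ((star U * V) i j) from rfl,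
        Complex.mul_conj]
      push_cast
      rw [show (star U * V) i j = W i j from rfl]
    simp_rw [h2, ← Complex.ofReal_sum, Complex.ofReal_re]
  -- the scalar inequality
  rw [hLtr, hTtr, hRHS]
  simp only [dlog, if_neg hq]
  set S : ℝ := ∑ i, x i ^ (2 - q) with hSdef
  set A : ℝ := ∑ i, ∑ j, p i j * (x i ^ (2 - q) * a j ^ (q - 1)) with hAdef
  have hsumbound : ∑ i, ∑ j, p i j * (T ^ (q - 1) * ((2 - q) * x i + (q - 1) * (a j / T)))
      = T ^ (q - 1) := by
    have inner : ∀ i, (∑ j, p i j * (T ^ (q - 1) * ((2 - q) * x i + (q - 1) * (a j / T))))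
        = T ^ (q - 1) * (2 - q) * x i + (T ^ (q - 1) * (q - 1) / T) * (∑ j, a j * p i j) := by
      intro i
      have hterm : ∀ j, p i j * (T ^ (q - 1) * ((2 - q) * x i + (q - 1) * (a j / T)))
          = (T ^ (q - 1) * (2 - q) * x i) * p i j
            + (T ^ (q - 1) * (q - 1) / T) * (a j * p i j) := by
        intro j
        field_simp
      simp_rw [hterm]
      rw [Finset.sum_add_distrib, ← Finset.mul_sum, ← Finset.mul_sum, hrow i, mul_one]
    simp_rw [inner]
    rw [Finset.sum_add_distrib, ← Finset.mul_sum, ← Finset.mul_sum, hsum1, mul_one]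
    have hS2 : ∑ i, ∑ j, a j * p i j = T := by
      rw [Finset.sum_comm, hTdef]
      refine Finset.sum_congr rfl fun j _ => ?_
      rw [← Finset.mul_sum, hcol j, mul_one]
    rw [hS2, div_mul_cancel₀ _ hT.ne', ← mul_add]
    norm_num
  have hA : A ≤ T ^ (q - 1) := by
    rw [hAdef, ← hsumbound]
    refine Finset.sum_le_sum fun i _ => Finset.sum_le_sum fun j _ => ?_
    refine mul_le_mul_of_nonneg_left ?_ (hp i j)
    have hgm := Real.geom_mean_le_arith_mean2_weighted hs0 hq1'.le (hxpos i).le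
      (div_nonneg (ha j).le hT.le) (by ring)
    have heq : x i ^ (2 - q) * a j ^ (q - 1)
        = T ^ (q - 1) * (x i ^ (2 - q) * (a j / T) ^ (q - 1)) := by
      rw [Real.div_rpow (ha j).le hT.le]
      field_simp
    rw [heq]
    exact mul_le_mul_of_nonneg_left hgm (Real.rpow_nonneg hT.le _)
  have hmu_eq : ∀ j, μ j = (a j ^ (q - 1) - 1) / (q - 1) := by
    intro j
    rw [haq j]
    field_simp
    ring
  have hLsum : ∑ i, ∑ j, x i ^ (2 - q) * μ j * p i j = (A - S) / (q - 1) := by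
    have hterm : ∀ i j, x i ^ (2 - q) * μ j * p i j
        = (p i j * (x i ^ (2 - q) * a j ^ (q - 1)) - x i ^ (2 - q) * p i j) / (q - 1) := by
      intro i j
      rw [hmu_eq j]
      field_simp
    simp_rw [hterm, ← Finset.sum_div]
    congr 1
    rw [hAdef, hSdef]
    simp_rw [Finset.sum_sub_distrib]
    congr 1
    refine Finset.sum_congr rfl fun i _ => ?_
    rw [← Finset.mul_sum, hrow i, mul_one]
  have hRsum : ∑ i, x i ^ (2 - q) * ((x i ^ (q - 1) - 1) / (q - 1)) = (1 - S) / (q - 1) := by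
    have hterm : ∀ i, x i ^ (2 - q) * ((x i ^ (q - 1) - 1) / (q - 1))
        = (x i - x i ^ (2 - q)) / (q - 1) := by
      intro i
      have hxx : x i ^ (2 - q) * x i ^ (q - 1) = x i := by
        rw [← Real.rpow_add (hxpos i)]
        norm_num
      rw [← mul_div_assoc, mul_sub, hxx, mul_one]
    simp_rw [hterm, ← Finset.sum_div, Finset.sum_sub_distrib, hsum1]
    rfl
  rw [hLsum, hRsum, div_sub_div_same]
  rw [div_le_div_iff_of_pos_right hq1']
  linarith
end
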